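/- Any order-preserving field isomorphism between countable subfields of two η₁-ordered real closed fields extends: given countable real closed subfields D ⊆ D*, I ⊆ I* where D*, I* are η₁-ordered real closed fields, an order isomorphism φ : D → I, and x ∈ D*, there exists y ∈ I* realizing the cut (φ[{d ∈ D : d < x}], φ[{d ∈ D : d > x}]). -/

import Mathlib

/-- An `η₁`-ordering: between any two countable subsets `A < B` there is an
element strictly between them. -/
def Eta1Ordering (F : Type*) [LinearOrder F] : Prop :=
  ∀ A B : Set F, A.Countable → B.Countable → (∀ a ∈ A, ∀ b ∈ B, a < b) →
    ∃ x, (∀ a ∈ A, a < x) ∧ (∀ b ∈ B, x < b)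

/-- A real closed ordered field. -/
def IsRealClosedField (F : Type*) [Field F] [LinearOrder F] [IsStrictOrderedRing F] : Prop :=
  (∀ x : F, 0 ≤ x → ∃ y, y ^ 2 = x) ∧
  (∀ p : Polynomial F, Odd p.natDegree → ∃ x, p.eval x = 0)

/-- A subfield is real closed: nonnegative elements have square roots in it and
odd degree polynomials with coefficients in it have roots in it. -/
def IsRealClosedSubfield {F : Type*} [Field F] [LinearOrder F] [IsStrictOrderedRing F] (D : Subfield F) : Prop :=
  (∀ x ∈ D, 0 ≤ x → ∃ y ∈ D, y ^ 2 = x) ∧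
  (∀ p : Polynomial F, (∀ i, p.coeff i ∈ D) → Odd p.natDegree →
    ∃ x ∈ D, p.eval x = 0)

/-- Given countable real closed subfields `D ⊆ F`, `I ⊆ K` of `η₁`-ordered
real closed fields `F`, `K`, an order isomorphism `φ : D → I`, and `x ∈ F`,
there is `y ∈ K` realizing the cut `(φ[{d < x}], φ[{d > x}])`. -/
theorem cut_realized {F K : Type*} [Field F] [LinearOrder F] [IsStrictOrderedRing F]
    [Field K] [LinearOrder K] [IsStrictOrderedRing K]
    (hF1 : Eta1Ordering F) (hK1 : Eta1Ordering K)
    (hFrc : IsRealClosedField F) (hKrc : IsRealClosedField K)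
    (D : Subfield F) (I : Subfield K)
    (hDc : (D : Set F).Countable) (hIc : (I : Set K).Countable)
    (hDrc : IsRealClosedSubfield D) (hIrc : IsRealClosedSubfield I)
    (φ : ↥D ≃+* ↥I) (hφ : StrictMono φ) (x : F) :
    ∃ y : K, ∀ d : ↥D, ((d : F) < x ↔ (φ d : K) < y) := by
  by_cases hx : x ∈ D
  · refine ⟨φ ⟨x, hx⟩, fun d => ?_⟩
    exact ⟨fun h => hφ (show d < ⟨x, hx⟩ from h), fun h => hφ.lt_iff_lt.mp h⟩
  · set A : Set K := (fun d : ↥D => (φ d : K)) '' {d : ↥D | (d : F) < x} with hA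
    set B : Set K := (fun d : ↥D => (φ d : K)) '' {d : ↥D | x < (d : F)} with hB
    have hDc' : (Set.univ : Set ↥D).Countable := by
      have := hDc.to_subtype
      exact Set.countable_univ
    have hAc : A.Countable := ((hDc'.mono (Set.subset_univ _)).image _)
    have hBc : B.Countable := ((hDc'.mono (Set.subset_univ _)).image _)
    have hAB : ∀ a ∈ A, ∀ b ∈ B, a < b := by
      rintro a ⟨d₁, hd₁, rfl⟩ b ⟨d₂, hd₂, rfl⟩
      have h1 : (d₁ : F) < x := hd₁
      have h2 : x < (d₂ : F) := hd₂
      have h3 : (d₁ : F) < (d₂ : F) := lt_trans h1 h2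
      exact_mod_cast hφ (Subtype.coe_lt_coe.mp h3)
    obtain ⟨y, hy₁, hy₂⟩ := hK1 A B hAc hBc hAB
    refine ⟨y, fun d => ?_⟩
    constructor
    · intro h
      exact hy₁ _ ⟨d, h, rfl⟩
    · intro h
      by_contra hlt
      have hne : (d : F) ≠ x := fun he => hx (he ▸ d.2)
      have hxd : x < (d : F) := lt_of_le_of_ne (not_lt.mp hlt) (Ne.symm hne)
      exact absurd h (not_lt.mpr (le_of_lt (hy₂ _ ⟨d, hxd, rfl⟩)))
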